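/- In the Grassmann graph J_q(n,k) with n > 2k, if x, y are vertices at distance i with 1 < i < k and z is a neighbor of x with ∂(z,y) = i - 1, then x ∩ y ⊆ z ⊆ x + y; consequently dim(z ∩ x ∩ y) = k - i and dim(z ∩ (x + y)) = k. -/

import Mathlib

/-- The Grassmann graph: vertices are the `k`-dimensional subspaces of `V`;
two vertices are adjacent when their intersection has dimension `k - 1`. -/
def grassmannGraph (F V : Type*) [Field F] [AddCommGroup V] [Module F V] (k : ℕ) :
    SimpleGraph {W : Submodule F V // Module.finrank F W = k} where
  Adj x y := x ≠ y ∧ Module.finrank F (x.1 ⊓ y.1 : Submodule F V) = k - 1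
  symm := by
    constructor
    intro x y h
    exact ⟨h.1.symm, by rw [inf_comm]; exact h.2⟩
  loopless := by
    constructor
    intro x h
    exact h.1 rfl

section Aux

open Module

variable {F V : Type*} [Field F] [AddCommGroup V] [Module F V] [FiniteDimensional F V] {k : ℕ}

/-- Adding a vector outside a subspace increases dimension by exactly 1. -/
lemma aux_finrank_sup_span {p : Submodule F V} {v : V} (hv : v ∉ p) :
    finrank F (p ⊔ Submodule.span F {v} : Submodule F V) = finrank F p + 1 := by
  have hv0 : v ≠ 0 := fun h => hv (h ▸ p.zero_mem)
  have hdisj : p ⊓ Submodule.span F {v} = ⊥ := by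
    rw [eq_bot_iff]
    intro w hw
    rcases Submodule.mem_span_singleton.mp hw.2 with ⟨c, rfl⟩
    rcases eq_or_ne c 0 with rfl | hc
    · simp
    · exfalso
      have h2 := p.smul_mem c⁻¹ hw.1
      rw [smul_smul, inv_mul_cancel₀ hc, one_smul] at h2
      exact hv h2
  have := Submodule.finrank_sup_add_finrank_inf_eq p (Submodule.span F {v})
  rw [hdisj, finrank_bot, finrank_span_singleton hv0] at this
  omega

/-- Existence of intermediate subspaces of any dimension. -/
lemma aux_exists_between (p q : Submodule F V) (hpq : p ≤ q) :
    ∀ m, finrank F p ≤ m → m ≤ finrank F q →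
      ∃ r : Submodule F V, p ≤ r ∧ r ≤ q ∧ finrank F r = m := by
  intro m
  induction m with
  | zero =>
    intro h1 _
    have : finrank F p = 0 := Nat.le_zero.mp h1
    exact ⟨p, le_refl p, hpq, this⟩
  | succ m ih =>
    intro h1 h2
    rcases Nat.lt_or_ge (finrank F p) (m + 1) with hlt | hge
    · -- finrank p ≤ m
      obtain ⟨r, hpr, hrq, hr⟩ := ih (Nat.lt_succ_iff.mp hlt) (Nat.le_of_succ_le h2)
      have hrq' : r < q := by
        rcases lt_or_eq_of_le hrq with h | rfl
        · exact h
        · omega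
      obtain ⟨v, hvq, hvr⟩ := SetLike.exists_of_lt hrq'
      refine ⟨r ⊔ Submodule.span F {v}, le_trans hpr le_sup_left,
        sup_le hrq'.le ((Submodule.span_singleton_le_iff_mem v q).mpr hvq), ?_⟩
      rw [aux_finrank_sup_span hvr, hr]
    · -- finrank p = m + 1
      exact ⟨p, le_refl p, hpq, le_antisymm (by omega) hge⟩

/-- One adjacency step changes the dimension of the intersection with a fixed
subspace by at most one. -/
lemma aux_step (hk : 1 ≤ k) {u v : {W : Submodule F V // Module.finrank F W = k}}
    (h : (grassmannGraph F V k).Adj u v) (w : Submodule F V) :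
    finrank F (v.1 ⊓ w : Submodule F V) ≤ finrank F (u.1 ⊓ w : Submodule F V) + 1 := by
  set A := u.1 ⊓ v.1 with hA
  set B := v.1 ⊓ w with hB
  have hAB : A ⊓ B ≤ u.1 ⊓ w :=
    le_inf (le_trans inf_le_left inf_le_left) (le_trans inf_le_right inf_le_right)
  have hABrank : finrank F (A ⊓ B : Submodule F V) ≤ finrank F (u.1 ⊓ w : Submodule F V) :=
    Submodule.finrank_mono hAB
  have hsup : A ⊔ B ≤ v.1 := sup_le inf_le_right inf_le_left
  have hsuprank : finrank F (A ⊔ B : Submodule F V) ≤ k :=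
    le_trans (Submodule.finrank_mono hsup) (le_of_eq v.2)
  have hArank : finrank F (A : Submodule F V) = k - 1 := h.2
  have key := Submodule.finrank_sup_add_finrank_inf_eq A B
  omega

/-- Lower bound: along a walk the intersection dimension drops by at most one
per step. -/
lemma aux_walk_lb (hk : 1 ≤ k) {u v : {W : Submodule F V // Module.finrank F W = k}}
    (p : (grassmannGraph F V k).Walk u v) :
    k ≤ finrank F (u.1 ⊓ v.1 : Submodule F V) + p.length := by
  induction p with
  | nil =>
    rename_i w
    simp only [SimpleGraph.Walk.length_nil, add_zero]
    rw [inf_idem]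
    exact w.2.ge
  | @cons a b c hadj q ih =>
    have := aux_step hk hadj c.1
    simp only [SimpleGraph.Walk.length_cons]
    omega

/-- Upper bound: there is a walk of length `k - dim(u ∩ v)`. -/
lemma aux_walk_ub (hk : 1 ≤ k) :
    ∀ d (u v : {W : Submodule F V // Module.finrank F W = k}),
      k - finrank F (u.1 ⊓ v.1 : Submodule F V) ≤ d →
      ∃ p : (grassmannGraph F V k).Walk u v,
        p.length + finrank F (u.1 ⊓ v.1 : Submodule F V) ≤ k := by
  intro d
  induction d with
  | zero =>
    intro u v hle
    have hle' : finrank F (u.1 ⊓ v.1 : Submodule F V) ≤ k :=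
      le_trans (Submodule.finrank_mono inf_le_left) (le_of_eq u.2)
    have heq : finrank F (u.1 ⊓ v.1 : Submodule F V) = k := by omega
    have h1 : u.1 ⊓ v.1 = u.1 :=
      Submodule.eq_of_le_of_finrank_le inf_le_left (by rw [heq, u.2])
    have h2 : u.1 ≤ v.1 := h1 ▸ inf_le_right
    have h3 : u.1 = v.1 := Submodule.eq_of_le_of_finrank_le h2 (by rw [u.2, v.2])
    have huv : u = v := Subtype.ext h3
    subst huv
    exact ⟨SimpleGraph.Walk.nil, by
      simp only [SimpleGraph.Walk.length_nil]; omega⟩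
  | succ d ih =>
    intro u v hle
    by_cases hcase : finrank F (u.1 ⊓ v.1 : Submodule F V) = k
    · have h1 : u.1 ⊓ v.1 = u.1 :=
        Submodule.eq_of_le_of_finrank_le inf_le_left (by rw [hcase, u.2])
      have h2 : u.1 ≤ v.1 := h1 ▸ inf_le_right
      have h3 : u.1 = v.1 := Submodule.eq_of_le_of_finrank_le h2 (by rw [u.2, v.2])
      have huv : u = v := Subtype.ext h3
      subst huv
      exact ⟨SimpleGraph.Walk.nil, by
        simp only [SimpleGraph.Walk.length_nil]; omega⟩
    · have hak : finrank F (u.1 ⊓ v.1 : Submodule F V) ≤ k :=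
        le_trans (Submodule.finrank_mono inf_le_left) (le_of_eq u.2)
      have halt : finrank F (u.1 ⊓ v.1 : Submodule F V) < k := lt_of_le_of_ne hak hcase
      -- pick a vector in v not in u
      have hnotle : ¬ v.1 ≤ u.1 := by
        intro hle2
        have hvu : v.1 = u.1 := Submodule.eq_of_le_of_finrank_le hle2 (by rw [u.2, v.2])
        apply hcase
        rw [hvu, inf_idem]
        exact u.2
      obtain ⟨w0, hw0v, hw0u⟩ := SetLike.not_le_iff_exists.mp hnotle
      -- pick a hyperplane of u containing u ⊓ v
      obtain ⟨H, hH1, hH2, hH3⟩ := aux_exists_between (u.1 ⊓ v.1) u.1 inf_le_left (k - 1)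
        (by omega) (by rw [u.2]; omega)
      have hw0H : w0 ∉ H := fun h => hw0u (hH2 h)
      set z0 : Submodule F V := H ⊔ Submodule.span F {w0} with hz0
      have hz0rank : finrank F z0 = k := by
        rw [hz0, aux_finrank_sup_span hw0H, hH3]; omega
      set z : {W : Submodule F V // Module.finrank F W = k} := ⟨z0, hz0rank⟩ with hz
      have hw0z : w0 ∈ z0 := by
        rw [hz0]
        exact Submodule.mem_sup_right (Submodule.mem_span_singleton_self w0)
      have huz0 : u.1 ≠ z0 := by
        intro h
        exact hw0u (h ▸ hw0z)
      -- adjacency of u and z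
      have hadjrank : finrank F (u.1 ⊓ z0 : Submodule F V) = k - 1 := by
        have hge : k - 1 ≤ finrank F (u.1 ⊓ z0 : Submodule F V) := by
          rw [← hH3]
          exact Submodule.finrank_mono (le_inf hH2 (hz0 ▸ le_sup_left))
        have hle2 : finrank F (u.1 ⊓ z0 : Submodule F V) ≤ k :=
          le_trans (Submodule.finrank_mono inf_le_left) (le_of_eq u.2)
        have hne : finrank F (u.1 ⊓ z0 : Submodule F V) ≠ k := by
          intro h
          have h1 : u.1 ⊓ z0 = u.1 :=
            Submodule.eq_of_le_of_finrank_le inf_le_left (by rw [h, u.2])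
          have h2 : u.1 ≤ z0 := h1 ▸ inf_le_right
          exact huz0 (Submodule.eq_of_le_of_finrank_le h2 (by rw [u.2, hz0rank]))
        omega
      have hadj : (grassmannGraph F V k).Adj u z :=
        ⟨fun h => huz0 (congrArg Subtype.val h), hadjrank⟩
      -- intersection of z with v grew
      have hzv : finrank F (u.1 ⊓ v.1 : Submodule F V) + 1
          ≤ finrank F (z.1 ⊓ v.1 : Submodule F V) := by
        have hsub : (u.1 ⊓ v.1) ⊔ Submodule.span F {w0} ≤ z0 ⊓ v.1 :=
          sup_le (le_inf (le_trans hH1 (hz0 ▸ le_sup_left)) inf_le_right)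
            (le_inf (hz0 ▸ le_sup_right) ((Submodule.span_singleton_le_iff_mem w0 v.1).mpr hw0v))
        have hrank : finrank F ((u.1 ⊓ v.1) ⊔ Submodule.span F {w0} : Submodule F V)
            = finrank F (u.1 ⊓ v.1 : Submodule F V) + 1 :=
          aux_finrank_sup_span (fun h => hw0u (Submodule.mem_inf.mp h).1)
        calc finrank F (u.1 ⊓ v.1 : Submodule F V) + 1
            = finrank F ((u.1 ⊓ v.1) ⊔ Submodule.span F {w0} : Submodule F V) := hrank.symm
          _ ≤ _ := Submodule.finrank_mono hsub
      obtain ⟨q, hq⟩ := ih z v (by omega)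
      exact ⟨SimpleGraph.Walk.cons hadj q, by
        simp only [SimpleGraph.Walk.length_cons]; omega⟩

/-- The distance formula in the Grassmann graph. -/
lemma aux_dist_eq (hk : 1 ≤ k) (u v : {W : Submodule F V // Module.finrank F W = k}) :
    finrank F (u.1 ⊓ v.1 : Submodule F V) + (grassmannGraph F V k).dist u v = k := by
  have hak : finrank F (u.1 ⊓ v.1 : Submodule F V) ≤ k :=
    le_trans (Submodule.finrank_mono inf_le_left) (le_of_eq u.2)
  obtain ⟨p, hp⟩ := aux_walk_ub hk k u v (by omega)
  have hreach : (grassmannGraph F V k).Reachable u v := ⟨p⟩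
  have hub : (grassmannGraph F V k).dist u v ≤ p.length := SimpleGraph.dist_le p
  obtain ⟨q, hq⟩ := hreach.exists_walk_length_eq_dist
  have hlb := aux_walk_lb hk q
  omega

end Aux

theorem stmt17 {F V : Type*} [Field F] [Fintype F] [AddCommGroup V] [Module F V]
    [FiniteDimensional F V] {n k : ℕ} (hn : Module.finrank F V = n)
    (hnk : n > 2 * k) (hk : 2 * k ≥ 6)
    (x y z : {W : Submodule F V // Module.finrank F W = k}) (i : ℕ)
    (hi1 : 1 < i) (hik : i < k) (hd : (grassmannGraph F V k).dist x y = i)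
    (hadj : (grassmannGraph F V k).Adj x z)
    (hdz : (grassmannGraph F V k).dist z y = i - 1) :
    (x.1 ⊓ y.1 ≤ z.1 ∧ z.1 ≤ x.1 ⊔ y.1) ∧
    Module.finrank F (z.1 ⊓ x.1 ⊓ y.1 : Submodule F V) = k - i ∧
    Module.finrank F (z.1 ⊓ (x.1 ⊔ y.1) : Submodule F V) = k := by
  have hk1 : 1 ≤ k := by omega
  have hxy : Module.finrank F (x.1 ⊓ y.1 : Submodule F V) = k - i := by
    have := aux_dist_eq hk1 x y
    omega
  have hzy : Module.finrank F (z.1 ⊓ y.1 : Submodule F V) = k - i + 1 := by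
    have := aux_dist_eq hk1 z y
    omega
  have hzx : Module.finrank F (z.1 ⊓ x.1 : Submodule F V) = k - 1 := by
    rw [inf_comm]; exact hadj.2
  set A := z.1 ⊓ x.1 with hA
  set B := z.1 ⊓ y.1 with hB
  have key := Submodule.finrank_sup_add_finrank_inf_eq A B
  have hsupz : A ⊔ B ≤ z.1 := sup_le inf_le_left inf_le_left
  have hsuprank : Module.finrank F (A ⊔ B : Submodule F V) ≤ k :=
    le_trans (Submodule.finrank_mono hsupz) (le_of_eq z.2)
  -- A ⊓ B = z ⊓ x ⊓ y
  have hABeq : A ⊓ B = z.1 ⊓ x.1 ⊓ y.1 := by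
    apply le_antisymm
    · exact le_inf inf_le_left (le_trans inf_le_right inf_le_right)
    · exact le_inf inf_le_left
        (le_inf (le_trans inf_le_left inf_le_left) inf_le_right)
  have hABle : A ⊓ B ≤ x.1 ⊓ y.1 := by
    rw [hABeq]
    exact le_inf (le_trans inf_le_left inf_le_right) inf_le_right
  have hABub : Module.finrank F (A ⊓ B : Submodule F V) ≤ k - i :=
    le_trans (Submodule.finrank_mono hABle) (le_of_eq hxy)
  have hABrank : Module.finrank F (A ⊓ B : Submodule F V) = k - i := by omega
  have hABfull : A ⊓ B = x.1 ⊓ y.1 :=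
    Submodule.eq_of_le_of_finrank_le hABle (by omega)
  have hxyz : x.1 ⊓ y.1 ≤ z.1 := by
    rw [← hABfull]
    exact le_trans inf_le_left inf_le_left
  -- second part
  have hsuprank' : Module.finrank F (A ⊔ B : Submodule F V) = k := by omega
  have hsuble : A ⊔ B ≤ z.1 ⊓ (x.1 ⊔ y.1) :=
    sup_le (le_inf inf_le_left (le_trans inf_le_right le_sup_left))
      (le_inf inf_le_left (le_trans inf_le_right le_sup_right))
  have hzxyub : Module.finrank F (z.1 ⊓ (x.1 ⊔ y.1) : Submodule F V) ≤ k :=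
    le_trans (Submodule.finrank_mono inf_le_left) (le_of_eq z.2)
  have hzxylb : k ≤ Module.finrank F (z.1 ⊓ (x.1 ⊔ y.1) : Submodule F V) :=
    le_trans (le_of_eq hsuprank'.symm) (Submodule.finrank_mono hsuble)
  have hzxyrank : Module.finrank F (z.1 ⊓ (x.1 ⊔ y.1) : Submodule F V) = k := by omega
  have hzfull : z.1 ⊓ (x.1 ⊔ y.1) = z.1 :=
    Submodule.eq_of_le_of_finrank_le inf_le_left (by rw [hzxyrank, z.2])
  have hzle : z.1 ≤ x.1 ⊔ y.1 := hzfull ▸ inf_le_right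
  exact ⟨⟨hxyz, hzle⟩, by rw [← hABeq, hABrank], hzxyrank⟩
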